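/- Let B_w be an invertible bilateral weighted backward shift on X = ℓp(ℤ) (1 ≤ p < ∞) or c0(ℤ), with weights bounded and bounded away from zero. If B_w has a nontrivial chain recurrent point, then every point of X is chain recurrent, i.e. CR(B_w) = X. -/

import Mathlib

open Finset

/-- `ℓᵖ(ℤ)`. -/
abbrev LpZ (p : ENNReal) := lp (fun _ : ℤ => ℝ) p

/-- `c₀(ℤ)`. -/
abbrev C0Z := ZeroAtInftyContinuousMap ℤ ℝ

section Defs

variable {X : Type*} [NormedAddCommGroup X] [NormedSpace ℝ X]

/-- `o : ℤ → X` is a full orbit of `T`. -/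
def IsOrbit (T : X ≃L[ℝ] X) (o : ℤ → X) : Prop := ∀ j : ℤ, o (j + 1) = T (o j)

/-- `(x_j)_{j ∈ ℤ}` is a `δ`-pseudotrajectory of `T`. -/
def IsPT (T : X ≃L[ℝ] X) (δ : ℝ) (x : ℤ → X) : Prop :=
  ∀ j : ℤ, ‖T (x j) - x (j + 1)‖ < δ

/-- A sequence `x : ℤ → X` is periodic. -/
def IsPer (x : ℤ → X) : Prop := ∃ p : ℕ, 1 ≤ p ∧ ∀ j : ℤ, x (j + p) = x j

/-- The shadowing property: every `δ`-pseudotrajectory is `ε`-shadowed by some full orbit. -/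
def SP (T : X ≃L[ℝ] X) : Prop :=
  ∀ ε > (0 : ℝ), ∃ δ > (0 : ℝ), ∀ x : ℤ → X, IsPT T δ x →
    ∃ o : ℤ → X, IsOrbit T o ∧ ∀ j : ℤ, ‖x j - o j‖ < ε

/-- The periodic shadowing property: every periodic `δ`-pseudotrajectory is `ε`-shadowed
by (the orbit of) a periodic point. -/
def PSP (T : X ≃L[ℝ] X) : Prop :=
  ∀ ε > (0 : ℝ), ∃ δ > (0 : ℝ), ∀ x : ℤ → X, IsPT T δ x → IsPer x →
    ∃ o : ℤ → X, IsOrbit T o ∧ IsPer o ∧ ∀ j : ℤ, ‖x j - o j‖ < ε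

/-- `x` is a chain recurrent point of `T`: for every `δ > 0` there is a finite
`δ`-chain from `x` to `x`. -/
def ChainRec (T : X →L[ℝ] X) (x : X) : Prop :=
  ∀ δ > (0 : ℝ), ∃ (k : ℕ) (c : ℕ → X), 1 ≤ k ∧ c 0 = x ∧ c k = x ∧
    ∀ j < k, ‖T (c j) - c (j + 1)‖ < δ

/-- `T` has no nontrivial periodic point. -/
def OnlyTrivialPer (T : X →L[ℝ] X) : Prop :=
  ∀ x : X, (∃ p : ℕ, 1 ≤ p ∧ (T ^ p) x = x) → x = 0

end Defs

section CRLemmas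

variable {X : Type*} [NormedAddCommGroup X] [NormedSpace ℝ X]

lemma cr_zero (S : X →L[ℝ] X) : ChainRec S 0 := by
  intro δ hδ
  exact ⟨1, fun _ => 0, le_refl _, rfl, rfl, fun j _ => by simpa using hδ⟩

lemma cr_smul (S : X →L[ℝ] X) {x : X} (a : ℝ) (h : ChainRec S x) : ChainRec S (a • x) := by
  rcases eq_or_ne a 0 with rfl | ha
  · simpa using cr_zero S
  intro δ hδ
  have hap : 0 < |a| := abs_pos.mpr ha
  obtain ⟨k, c, hk, h0, hke, hstep⟩ := h (δ / |a|) (div_pos hδ hap)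
  refine ⟨k, fun j => a • c j, hk, by show a • c 0 = a • x; rw [h0],
    by show a • c k = a • x; rw [hke], fun j hj => ?_⟩
  show ‖S (a • c j) - a • c (j + 1)‖ < δ
  rw [map_smul, ← smul_sub, norm_smul, Real.norm_eq_abs]
  calc |a| * ‖S (c j) - c (j + 1)‖ < |a| * (δ / |a|) :=
        mul_lt_mul_of_pos_left (hstep j hj) hap
    _ = δ := by field_simp

lemma cr_periodize (S : X →L[ℝ] X) {x : X} (h : ChainRec S x) {δ : ℝ} (hδ : 0 < δ) :
    ∃ k : ℕ, 1 ≤ k ∧ ∃ c : ℕ → X, c 0 = x ∧ (∀ m : ℕ, c (m * k) = x) ∧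
      ∀ j : ℕ, ‖S (c j) - c (j + 1)‖ < δ := by
  obtain ⟨k, c, hk, h0, hke, hstep⟩ := h δ hδ
  have hkpos : 0 < k := hk
  refine ⟨k, hk, fun j => c (j % k), by simp [h0],
    fun m => by simp [Nat.mul_mod_left, h0], fun j => ?_⟩
  have hr : j % k < k := Nat.mod_lt _ hkpos
  have key : (j + 1) % k = (j % k + 1) % k := by
    conv_lhs => rw [← Nat.mod_add_div j k, add_right_comm]
    exact Nat.add_mul_mod_self_left (j % k + 1) k (j / k)
  show ‖S (c (j % k)) - c ((j + 1) % k)‖ < δ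
  rcases eq_or_lt_of_le (Nat.succ_le_of_lt hr) with heq | hlt
  · have heq' : j % k + 1 = k := heq
    have h2 : c ((j + 1) % k) = c (j % k + 1) := by
      rw [key, heq', Nat.mod_self, h0, hke]
    rw [h2]; exact hstep _ hr
  · have h2 : (j + 1) % k = j % k + 1 := by
      rw [key]; exact Nat.mod_eq_of_lt hlt
    rw [h2]; exact hstep _ hr

lemma cr_add (S : X →L[ℝ] X) {x y : X} (hx : ChainRec S x) (hy : ChainRec S y) :
    ChainRec S (x + y) := by
  intro δ hδ
  obtain ⟨k, hk, c, hc0, hck, hcs⟩ := cr_periodize S hx (half_pos hδ)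
  obtain ⟨l, hl, d, hd0, hdl, hds⟩ := cr_periodize S hy (half_pos hδ)
  refine ⟨k * l, fun j => c j + d j, Nat.mul_pos hk hl,
    by show c 0 + d 0 = x + y; rw [hc0, hd0], ?_, fun j _ => ?_⟩
  · show c (k * l) + d (k * l) = x + y
    have h1 : c (k * l) = x := by rw [mul_comm]; exact hck l
    rw [h1, hdl k]
  · show ‖S (c j + d j) - (c (j + 1) + d (j + 1))‖ < δ
    rw [map_add]
    have : S (c j) + S (d j) - (c (j + 1) + d (j + 1))
        = (S (c j) - c (j + 1)) + (S (d j) - d (j + 1)) := by ring_nf; abel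
    rw [this]
    calc ‖(S (c j) - c (j + 1)) + (S (d j) - d (j + 1))‖
        ≤ ‖S (c j) - c (j + 1)‖ + ‖S (d j) - d (j + 1)‖ := norm_add_le _ _
      _ < δ / 2 + δ / 2 := add_lt_add (hcs j) (hds j)
      _ = δ := add_halves δ

lemma cr_sum (S : X →L[ℝ] X) {ι : Type*} (F : Finset ι) (f : ι → X)
    (h : ∀ i ∈ F, ChainRec S (f i)) : ChainRec S (∑ i ∈ F, f i) :=
  Finset.sum_induction f (ChainRec S) (fun _ _ ha hb => cr_add S ha hb) (cr_zero S) h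

lemma cr_comm (S : X →L[ℝ] X) (L : X →L[ℝ] X) (hcomm : ∀ z, S (L z) = L (S z)) {x : X}
    (h : ChainRec S x) : ChainRec S (L x) := by
  intro δ hδ
  have hM : (0:ℝ) < ‖L‖ + 1 := by positivity
  obtain ⟨k, c, hk, h0, hke, hstep⟩ := h (δ / (‖L‖ + 1)) (div_pos hδ hM)
  refine ⟨k, fun j => L (c j), hk, by show L (c 0) = L x; rw [h0],
    by show L (c k) = L x; rw [hke], fun j hj => ?_⟩
  show ‖S (L (c j)) - L (c (j + 1))‖ < δ
  rw [hcomm, ← map_sub]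
  calc ‖L (S (c j) - c (j + 1))‖ ≤ ‖L‖ * ‖S (c j) - c (j + 1)‖ := L.le_opNorm _
    _ ≤ (‖L‖ + 1) * ‖S (c j) - c (j + 1)‖ := by
        have := norm_nonneg (S (c j) - c (j + 1)); nlinarith
    _ < (‖L‖ + 1) * (δ / (‖L‖ + 1)) := by
        exact mul_lt_mul_of_pos_left (hstep j hj) hM
    _ = δ := by field_simp

lemma cr_of_approx (S : X →L[ℝ] X) {x : X}
    (h : ∀ ε > (0:ℝ), ∃ y, ChainRec S y ∧ ‖x - y‖ < ε) : ChainRec S x := by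
  intro δ hδ
  have hM : (0:ℝ) < ‖S‖ + 1 := by positivity
  obtain ⟨y, hy, hxy⟩ := h (δ / (4 * (‖S‖ + 1))) (by positivity)
  obtain ⟨k, c, hk, h0, hke, hstep⟩ := hy (δ / 2) (half_pos hδ)
  set c' : ℕ → X := fun j => if j = 0 ∨ j = k then x else c j with hc'
  have hdiff : ∀ i, i ≤ k → ‖c' i - c i‖ ≤ ‖x - y‖ := by
    intro i hi
    simp only [hc']
    split
    · rename_i hcase
      rcases hcase with rfl | rfl
      · rw [h0]
      · rw [hke]
    · simp
  refine ⟨k, c', hk, by simp [hc'], by simp [hc'], fun j hj => ?_⟩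
  have e1 : S (c' j) - c' (j + 1)
      = S (c' j - c j) + (S (c j) - c (j + 1)) + (c (j + 1) - c' (j + 1)) := by
    rw [map_sub]; abel
  have b1 : ‖S (c' j - c j)‖ ≤ (‖S‖ + 1) * ‖x - y‖ := by
    calc ‖S (c' j - c j)‖ ≤ ‖S‖ * ‖c' j - c j‖ := S.le_opNorm _
      _ ≤ (‖S‖ + 1) * ‖x - y‖ := by
          have h1 := hdiff j (le_of_lt hj)
          have h2 := norm_nonneg (c' j - c j)
          have h3 := norm_nonneg S
          have h4 := norm_nonneg (x - y)
          nlinarith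
  have b3 : ‖c (j + 1) - c' (j + 1)‖ ≤ ‖x - y‖ := by
    rw [norm_sub_rev]; exact hdiff (j + 1) hj
  have b2 := hstep j hj
  have hb : ‖x - y‖ < δ / (4 * (‖S‖ + 1)) := hxy
  rw [e1]
  calc ‖S (c' j - c j) + (S (c j) - c (j + 1)) + (c (j + 1) - c' (j + 1))‖
      ≤ ‖S (c' j - c j)‖ + ‖S (c j) - c (j + 1)‖ + ‖c (j + 1) - c' (j + 1)‖ :=
        norm_add₃_le
    _ < δ := by
        have hS1 : (1:ℝ) ≤ ‖S‖ + 1 := by have := norm_nonneg S; linarith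
        have : (‖S‖ + 1) * ‖x - y‖ < (‖S‖ + 1) * (δ / (4 * (‖S‖ + 1))) :=
          mul_lt_mul_of_pos_left hb hM
        have he : (‖S‖ + 1) * (δ / (4 * (‖S‖ + 1))) = δ / 4 := by field_simp
        have hxy' : ‖x - y‖ ≤ (‖S‖ + 1) * ‖x - y‖ := by
          have := norm_nonneg (x - y); nlinarith
        nlinarith

lemma exists_one_le_not_mem {s : Set ℕ} (hs : s.Finite) : ∃ m, 1 ≤ m ∧ m ∉ s := by
  obtain ⟨m, hm⟩ := (hs.insert 0).infinite_compl.nonempty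
  simp only [Set.mem_compl_iff, Set.mem_insert_iff, not_or] at hm
  exact ⟨m, Nat.one_le_iff_ne_zero.mpr hm.1, hm.2⟩

end CRLemmas
section Master

variable {X : Type*} [NormedAddCommGroup X] [NormedSpace ℝ X]

set_option maxHeartbeats 2000000 in
theorem master
    (w : ℤ → ℝ) (C : ℝ) (hC1 : 1 ≤ C) (hC : ∀ n, |w n| ≤ C) (hw0 : ∀ n, w n ≠ 0)
    (T : X ≃L[ℝ] X) (χ : ℤ → X →ₗ[ℝ] ℝ) (e : ℤ → X)
    (hχnorm : ∀ (y : X) (n : ℤ), |χ n y| ≤ ‖y‖)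
    (hsep : ∀ y : X, (∀ n, χ n y = 0) → y = 0)
    (hχT : ∀ (y : X) (n : ℤ), χ n (T y) = w (n + 1) * χ (n + 1) y)
    (he : ∀ n m : ℤ, χ m (e n) = if m = n then 1 else 0)
    (henorm : ∀ n, ‖e n‖ ≤ 1)
    (htail : ∀ (y : X) (ε : ℝ), 0 < ε → {n : ℤ | ε ≤ |χ n y|}.Finite)
    (hdens : ∀ (y : X) (ε : ℝ), 0 < ε → ∃ F : Finset ℤ, ‖y - ∑ n ∈ F, χ n y • e n‖ < ε)
    (hex : ∃ x : X, x ≠ 0 ∧ ChainRec (T : X →L[ℝ] X) x) :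
    ∀ x : X, ChainRec (T : X →L[ℝ] X) x := by
  set S : X →L[ℝ] X := (T : X →L[ℝ] X) with hSdef
  have hSapp : ∀ z : X, S z = T z := fun z => rfl
  obtain ⟨x, hx0, hxcr⟩ := hex
  have hn0e : ∃ n0 : ℤ, χ n0 x ≠ 0 := by
    by_contra hcon; push_neg at hcon; exact hx0 (hsep x hcon)
  obtain ⟨n0, hn0⟩ := hn0e
  set A : ℝ := |χ n0 x| with hA
  have hApos : 0 < A := abs_pos.mpr hn0
  -- action of T on basis vectors
  have Te : ∀ n : ℤ, T (e n) = w n • (e (n - 1)) := by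
    intro n
    have hz : ∀ m, χ m (T (e n) - w n • e (n - 1)) = 0 := by
      intro m
      rw [map_sub, map_smul, smul_eq_mul, hχT, he, he]
      by_cases h : m + 1 = n
      · rw [if_pos h, if_pos (by omega : m = n - 1), h]; ring
      · rw [if_neg h, if_neg (by omega : ¬ m = n - 1)]; ring
    have := hsep _ hz
    rwa [sub_eq_zero] at this
  -- descent control
  have hdesc : ∀ η : ℝ, 0 < η → ∃ K : ℕ, 1 ≤ K ∧ ∃ b : ℕ → ℝ, b 0 = 1 ∧
      (∀ j < K, |w (n0 - j) * b j - b (j + 1)| < η) ∧ |b K| < η := by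
    intro η hη
    obtain ⟨k, hk, c, hc0, hcm, hcs⟩ := cr_periodize S hxcr (mul_pos hη hApos)
    have hfin : {n : ℤ | η * A ≤ |χ n x|}.Finite := htail x (η * A) (mul_pos hη hApos)
    have hfin2 : {m : ℕ | η * A ≤ |χ (n0 - ((m * k : ℕ) : ℤ)) x|}.Finite := by
      have hinj : Function.Injective (fun m : ℕ => n0 - ((m * k : ℕ) : ℤ)) := by
        intro a b hab
        simp only at hab
        have h1 : ((a * k : ℕ) : ℤ) = ((b * k : ℕ) : ℤ) := by linarith
        have h2 : a * k = b * k := Nat.cast_inj.mp h1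
        exact Nat.eq_of_mul_eq_mul_right hk h2
      exact Set.Finite.preimage (f := fun m : ℕ => n0 - ((m * k : ℕ) : ℤ))
        (s := {n : ℤ | η * A ≤ |χ n x|}) hinj.injOn hfin
    obtain ⟨m, hm1, hmnot⟩ := exists_one_le_not_mem hfin2
    refine ⟨m * k, Nat.mul_pos hm1 hk,
      fun j => χ (n0 - (j : ℤ)) (c j) / χ n0 x, ?_, ?_, ?_⟩
    · show χ (n0 - ((0:ℕ) : ℤ)) (c 0) / χ n0 x = 1
      rw [hc0]; norm_num; exact hn0
    · intro j hj
      show |w (n0 - j) * (χ (n0 - (j : ℤ)) (c j) / χ n0 x)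
          - χ (n0 - ((j + 1 : ℕ) : ℤ)) (c (j + 1)) / χ n0 x| < η
      have hidx : ((j + 1 : ℕ) : ℤ) = (j : ℤ) + 1 := by push_cast; ring
      have hT1 : χ (n0 - (j:ℤ) - 1) (T (c j)) = w (n0 - j) * χ (n0 - (j:ℤ)) (c j) := by
        have h := hχT (c j) (n0 - (j:ℤ) - 1)
        rw [show n0 - (j:ℤ) - 1 + 1 = n0 - j by ring] at h
        exact h
      have hb : |χ (n0 - (j:ℤ) - 1) (T (c j) - c (j + 1))| < η * A :=
        lt_of_le_of_lt (hχnorm _ _) (by exact hcs j)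
      rw [map_sub, hT1] at hb
      have hrw : w (n0 - j) * (χ (n0 - (j:ℤ)) (c j) / χ n0 x)
          - χ (n0 - ((j + 1 : ℕ) : ℤ)) (c (j + 1)) / χ n0 x
          = (w (n0 - j) * χ (n0 - (j:ℤ)) (c j) - χ (n0 - (j:ℤ) - 1) (c (j + 1))) / χ n0 x := by
        rw [hidx, show n0 - ((j:ℤ) + 1) = n0 - (j:ℤ) - 1 by ring]; ring
      rw [hrw, abs_div, ← hA, div_lt_iff₀ hApos]
      exact lt_of_le_of_lt (le_of_eq rfl) hb
    · show |χ (n0 - ((m * k : ℕ) : ℤ)) (c (m * k)) / χ n0 x| < η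
      rw [hcm m, abs_div, ← hA, div_lt_iff₀ hApos]
      exact not_le.mp hmnot
  -- weight products to the right of n0
  set Q : ℕ → ℝ := fun i => ∏ j ∈ Finset.range i, w (n0 + 1 + j) with hQdef
  have hQ0 : Q 0 = 1 := by simp [hQdef]
  have hQsucc : ∀ i, Q (i + 1) = Q i * w (n0 + 1 + i) := fun i => Finset.prod_range_succ _ i
  have hQne : ∀ i, Q i ≠ 0 := fun i => Finset.prod_ne_zero_iff.mpr (fun j _ => hw0 _)
  -- ascent control
  have hasc : ∀ R : ℝ, 0 < R → ∃ m : ℕ, 1 ≤ m ∧ R ≤ ∑ i ∈ Finset.range m, |Q i| := by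
    intro R hR
    obtain ⟨k, hk, c, hc0, hcm, hcs⟩ :=
      cr_periodize S hxcr (show (0:ℝ) < A / (4 * R) by positivity)
    have hfin : {n : ℤ | A / (2 * R) ≤ |χ n x|}.Finite := htail x _ (by positivity)
    have hfin2 : {m : ℕ | A / (2 * R) ≤ |χ (n0 + ((m * k : ℕ) : ℤ)) x|}.Finite := by
      have hinj : Function.Injective (fun m : ℕ => n0 + ((m * k : ℕ) : ℤ)) := by
        intro a b hab
        simp only at hab
        have h1 : ((a * k : ℕ) : ℤ) = ((b * k : ℕ) : ℤ) := by linarith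
        exact Nat.eq_of_mul_eq_mul_right hk (Nat.cast_inj.mp h1)
      exact Set.Finite.preimage (f := fun m : ℕ => n0 + ((m * k : ℕ) : ℤ))
        (s := {n : ℤ | A / (2 * R) ≤ |χ n x|}) hinj.injOn hfin
    obtain ⟨m, hm1, hmnot⟩ := exists_one_le_not_mem hfin2
    set K := m * k with hKdef
    have hK1 : 1 ≤ K := Nat.mul_pos hm1 hk
    set a : ℕ → ℝ := fun j => χ (n0 + (K : ℤ) - j) (c j) with ha
    have hstepa : ∀ j : ℕ, |a (j + 1) - w (n0 + (K:ℤ) - j) * a j| < A / (4 * R) := by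
      intro j
      have hT1 : χ (n0 + (K:ℤ) - j - 1) (T (c j))
          = w (n0 + (K:ℤ) - j) * χ (n0 + (K:ℤ) - j) (c j) := by
        have h := hχT (c j) (n0 + (K:ℤ) - j - 1)
        rw [show n0 + (K:ℤ) - j - 1 + 1 = n0 + (K:ℤ) - j by ring] at h
        exact h
      have hb : |χ (n0 + (K:ℤ) - j - 1) (c (j + 1) - T (c j))| < A / (4 * R) := by
        refine lt_of_le_of_lt (hχnorm _ _) ?_
        rw [norm_sub_rev]
        exact hcs j
      rw [map_sub, hT1] at hb
      have hidx : n0 + (K:ℤ) - ((j + 1 : ℕ) : ℤ) = n0 + (K:ℤ) - j - 1 := by push_cast; ring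
      show |χ (n0 + (K:ℤ) - ((j + 1 : ℕ) : ℤ)) (c (j + 1))
          - w (n0 + (K:ℤ) - j) * χ (n0 + (K:ℤ) - j) (c j)| < A / (4 * R)
      rw [hidx]
      exact hb
    have hind : ∀ j : ℕ, j ≤ K → |a j| * |Q (K - j)| ≤
        |a 0| * |Q K| + (A / (4 * R)) * ∑ i ∈ Finset.Ico (K - j) K, |Q i| := by
      intro j
      induction j with
      | zero =>
        intro _
        simp only [Nat.sub_zero, Finset.Ico_self, Finset.sum_empty, mul_zero, add_zero]
        exact le_refl _
      | succ j ih =>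
        intro hj1
        have hj : j < K := hj1
        have hih := ih (le_of_lt hj)
        have h2 : |a (j + 1)| ≤ |w (n0 + (K:ℤ) - j)| * |a j| + A / (4 * R) := by
          have h3 := hstepa j
          have h4 : |a (j + 1)| ≤ |w (n0 + (K:ℤ) - j) * a j|
              + |a (j + 1) - w (n0 + (K:ℤ) - j) * a j| := by
            have := abs_add_le (w (n0 + (K:ℤ) - j) * a j) (a (j + 1) - w (n0 + (K:ℤ) - j) * a j)
            simpa using this
          rw [abs_mul] at h4
          linarith
        obtain ⟨i0, hi0⟩ : ∃ i0, K - j = i0 + 1 := ⟨K - j - 1, by omega⟩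
        have hi0' : K - j - 1 = i0 := by omega
        have hQs : |Q (K - j)| = |w (n0 + (K:ℤ) - j)| * |Q (K - j - 1)| := by
          have h6 : (n0 + 1 + (i0 : ℤ)) = n0 + (K:ℤ) - j := by omega
          rw [hi0', hi0, hQsucc, h6, abs_mul, mul_comm]
        have hsum : ∑ i ∈ Finset.Ico (K - (j+1)) K, |Q i|
            = |Q (K - j - 1)| + ∑ i ∈ Finset.Ico (K - j) K, |Q i| := by
          have h7 : K - (j + 1) = K - j - 1 := by omega
          have h8 : K - j - 1 < K := by omega
          have h9 : K - j - 1 + 1 = K - j := by omega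
          rw [h7, Finset.sum_eq_sum_Ico_succ_bot h8, h9]
        have h10 : K - (j + 1) = K - j - 1 := by omega
        rw [hsum, h10]
        have hQn1 : (0:ℝ) ≤ |Q (K - j - 1)| := abs_nonneg _
        have hQn2 : (0:ℝ) ≤ |a j| := abs_nonneg _
        have hwn : (0:ℝ) ≤ |w (n0 + (K:ℤ) - j)| := abs_nonneg _
        calc |a (j + 1)| * |Q (K - j - 1)|
            ≤ (|w (n0 + (K:ℤ) - j)| * |a j| + A / (4 * R)) * |Q (K - j - 1)| := by
              exact mul_le_mul_of_nonneg_right h2 hQn1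
          _ = |a j| * (|w (n0 + (K:ℤ) - j)| * |Q (K - j - 1)|)
              + A / (4 * R) * |Q (K - j - 1)| := by ring
          _ = |a j| * |Q (K - j)| + A / (4 * R) * |Q (K - j - 1)| := by rw [← hQs]
          _ ≤ (|a 0| * |Q K| + A / (4 * R) * ∑ i ∈ Finset.Ico (K - j) K, |Q i|)
              + A / (4 * R) * |Q (K - j - 1)| := by linarith
          _ = |a 0| * |Q K| + A / (4 * R)
              * (|Q (K - j - 1)| + ∑ i ∈ Finset.Ico (K - j) K, |Q i|) := by ring
    have hfinal := hind K (le_refl K)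
    have haK : |a K| = A := by
      have : a K = χ n0 x := by
        simp only [ha]
        rw [show n0 + (K:ℤ) - (K:ℤ) = n0 by ring, hcm m]
      rw [this, hA]
    have ha0 : |a 0| < A / (2 * R) := by
      have h1 : a 0 = χ (n0 + ((m * k : ℕ) : ℤ)) x := by
        simp only [ha, Nat.cast_zero, sub_zero, hc0, hKdef]
      rw [h1]
      exact not_le.mp hmnot
    rw [Nat.sub_self, hQ0, abs_one, mul_one, haK] at hfinal
    have hIco : Finset.Ico (0:ℕ) K = Finset.range K := by rw [Finset.range_eq_Ico]
    rw [hIco] at hfinal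
    set Ssum := ∑ i ∈ Finset.range K, |Q i| with hSsum
    have hSnn : 0 ≤ Ssum := Finset.sum_nonneg fun i _ => abs_nonneg _
    by_cases hcase : A / 2 ≤ A / (4 * R) * Ssum
    · refine ⟨K, hK1, ?_⟩
      rw [← hSsum]
      rw [div_mul_eq_mul_div, le_div_iff₀ (by positivity : (0:ℝ) < 4 * R)] at hcase
      nlinarith [mul_pos hApos hR]
    · push_neg at hcase
      have h1 : A / 2 < |a 0| * |Q K| := by linarith
      have h2 : |a 0| * |Q K| ≤ A / (2 * R) * |Q K| :=
        mul_le_mul_of_nonneg_right (le_of_lt ha0) (abs_nonneg _)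
      have h3 : A / 2 < A / (2 * R) * |Q K| := lt_of_lt_of_le h1 h2
      rw [div_mul_eq_mul_div, lt_div_iff₀ (by positivity : (0:ℝ) < 2 * R)] at h3
      have h4 : R ≤ |Q K| := by nlinarith [hApos]
      refine ⟨K + 1, by omega, ?_⟩
      calc R ≤ |Q K| := h4
        _ ≤ ∑ i ∈ Finset.range (K + 1), |Q i| :=
          Finset.single_le_sum (f := fun i => |Q i|) (fun i _ => abs_nonneg _)
            (Finset.self_mem_range_succ K)
  -- the base point e n0 is chain recurrent
  have hC0 : (0:ℝ) < C := lt_of_lt_of_le one_pos hC1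
  have hecr : ChainRec S (e n0) := by
    intro δ hδ
    obtain ⟨K, hK1, b, hb0, hbs, hbK⟩ := hdesc (δ / (2 * C)) (by positivity)
    obtain ⟨m, hm1, hSm⟩ := hasc (1 / δ + 1) (by positivity)
    set Sm := ∑ i ∈ Finset.range m, |Q i| with hSmdef
    have hSmpos : 0 < Sm := lt_of_lt_of_le (by positivity) hSm
    have hSmδ : 1 / Sm < δ := by
      rw [div_lt_iff₀ hSmpos]
      have h1 : 1 / δ < Sm := lt_of_lt_of_le (by linarith) hSm
      calc (1:ℝ) = δ * (1 / δ) := by rw [mul_one_div, div_self hδ.ne']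
        _ < δ * Sm := mul_lt_mul_of_pos_left h1 hδ
    set α : ℕ → ℝ := fun i => (∑ l ∈ Finset.Ico i m, |Q l|) / (Sm * Q i) with hα
    have hα0 : α 0 = 1 := by
      simp only [hα]
      rw [hQ0, mul_one, ← Finset.range_eq_Ico, ← hSmdef]
      exact div_self hSmpos.ne'
    have hαm : α m = 0 := by simp [hα]
    have hαstep : ∀ i < m, |w (n0 + 1 + i) * α (i + 1) - α i| < δ := by
      intro i hi
      have hQi : Q i ≠ 0 := hQne i
      have habs : |Q i| ≠ 0 := abs_ne_zero.mpr hQi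
      have hwne : w (n0 + 1 + i) ≠ 0 := hw0 _
      have hsplit : ∑ l ∈ Finset.Ico i m, |Q l|
          = |Q i| + ∑ l ∈ Finset.Ico (i + 1) m, |Q l| :=
        Finset.sum_eq_sum_Ico_succ_bot hi _
      have hkey : w (n0 + 1 + i) * α (i + 1) - α i = -(|Q i| / (Sm * Q i)) := by
        simp only [hα]
        rw [hQsucc i, hsplit]
        field_simp
        ring
      rw [hkey, abs_neg, abs_div, abs_mul, abs_of_pos hSmpos, abs_abs]
      have h2 : |Q i| / (Sm * |Q i|) = 1 / Sm := by
        rw [mul_comm, ← div_div, div_self habs]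
      rw [h2]
      exact hSmδ
    -- build the chain
    refine ⟨K + 1 + m, fun j => if j ≤ K then b j • e (n0 - (j : ℤ))
      else α (K + 1 + m - j) • e (n0 + ((K + 1 + m - j : ℕ) : ℤ)), by omega, ?_, ?_, ?_⟩
    · show (if 0 ≤ K then b 0 • e (n0 - ((0:ℕ) : ℤ))
        else α (K + 1 + m - 0) • e (n0 + ((K + 1 + m - 0 : ℕ) : ℤ))) = e n0
      rw [if_pos (Nat.zero_le K), hb0, one_smul]
      norm_num
    · show (if K + 1 + m ≤ K then b (K + 1 + m) • e (n0 - ((K + 1 + m : ℕ) : ℤ))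
        else α (K + 1 + m - (K + 1 + m)) • e (n0 + ((K + 1 + m - (K + 1 + m) : ℕ) : ℤ))) = e n0
      rw [if_neg (by omega), Nat.sub_self, hα0, one_smul]
      norm_num
    · intro j hj
      rcases lt_trichotomy j K with hcase | hcase | hcase
      · -- descent step
        have e1 : j ≤ K := le_of_lt hcase
        have e2 : j + 1 ≤ K := hcase
        show ‖S (if j ≤ K then b j • e (n0 - (j : ℤ))
            else α (K + 1 + m - j) • e (n0 + ((K + 1 + m - j : ℕ) : ℤ)))
          - (if j + 1 ≤ K then b (j + 1) • e (n0 - ((j + 1 : ℕ) : ℤ))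
            else α (K + 1 + m - (j + 1)) • e (n0 + ((K + 1 + m - (j + 1) : ℕ) : ℤ)))‖ < δ
        rw [if_pos e1, if_pos e2]
        have hTe : S (b j • e (n0 - (j:ℤ))) = (b j * w (n0 - j)) • e (n0 - (j:ℤ) - 1) := by
          rw [hSapp, map_smul, Te, smul_smul]
        have hidx : n0 - ((j + 1 : ℕ) : ℤ) = n0 - (j:ℤ) - 1 := by push_cast; ring
        rw [hidx, hTe, ← sub_smul]
        have hn : ‖(b j * w (n0 - (j:ℤ)) - b (j + 1)) • e (n0 - (j:ℤ) - 1)‖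
            ≤ |b j * w (n0 - (j:ℤ)) - b (j + 1)| := by
          rw [norm_smul, Real.norm_eq_abs]
          exact mul_le_of_le_one_right (abs_nonneg _) (henorm _)
        have hb1 : |b j * w (n0 - (j:ℤ)) - b (j + 1)| < δ / (2 * C) := by
          rw [mul_comm (b j)]
          exact hbs j hcase
        have hd : δ / (2 * C) ≤ δ / 2 := by
          apply div_le_div_of_nonneg_left (le_of_lt hδ) (by norm_num) (by linarith)
        calc ‖(b j * w (n0 - (j:ℤ)) - b (j + 1)) • e (n0 - (j:ℤ) - 1)‖
            ≤ |b j * w (n0 - (j:ℤ)) - b (j + 1)| := hn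
          _ < δ / (2 * C) := hb1
          _ ≤ δ / 2 := hd
          _ < δ := by linarith
      · -- turning step
        subst hcase
        show ‖S (if j ≤ j then b j • e (n0 - (j : ℤ))
            else α (j + 1 + m - j) • e (n0 + ((j + 1 + m - j : ℕ) : ℤ)))
          - (if j + 1 ≤ j then b (j + 1) • e (n0 - ((j + 1 : ℕ) : ℤ))
            else α (j + 1 + m - (j + 1)) • e (n0 + ((j + 1 + m - (j + 1) : ℕ) : ℤ)))‖ < δ
        rw [if_pos (le_refl j), if_neg (by omega)]
        have hm0 : j + 1 + m - (j + 1) = m := by omega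
        rw [hm0, hαm, zero_smul, sub_zero]
        have hTe : S (b j • e (n0 - (j:ℤ))) = (b j * w (n0 - j)) • e (n0 - (j:ℤ) - 1) := by
          rw [hSapp, map_smul, Te, smul_smul]
        rw [hTe]
        have hn : ‖(b j * w (n0 - (j:ℤ))) • e (n0 - (j:ℤ) - 1)‖
            ≤ |b j * w (n0 - (j:ℤ))| := by
          rw [norm_smul, Real.norm_eq_abs]
          exact mul_le_of_le_one_right (abs_nonneg _) (henorm _)
        have hb2 : |b j * w (n0 - (j:ℤ))| ≤ |b j| * C := by
          rw [abs_mul]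
          exact mul_le_mul_of_nonneg_left (hC _) (abs_nonneg _)
        have hb3 : |b j| * C < (δ / (2 * C)) * C := mul_lt_mul_of_pos_right hbK hC0
        have hb4 : (δ / (2 * C)) * C = δ / 2 := by field_simp
        calc ‖(b j * w (n0 - (j:ℤ))) • e (n0 - (j:ℤ) - 1)‖
            ≤ |b j * w (n0 - (j:ℤ))| := hn
          _ ≤ |b j| * C := hb2
          _ < (δ / (2 * C)) * C := hb3
          _ = δ / 2 := hb4
          _ < δ := by linarith
      · -- ascent step
        have e1 : ¬ j ≤ K := by omega
        have e2 : ¬ j + 1 ≤ K := by omega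
        show ‖S (if j ≤ K then b j • e (n0 - (j : ℤ))
            else α (K + 1 + m - j) • e (n0 + ((K + 1 + m - j : ℕ) : ℤ)))
          - (if j + 1 ≤ K then b (j + 1) • e (n0 - ((j + 1 : ℕ) : ℤ))
            else α (K + 1 + m - (j + 1)) • e (n0 + ((K + 1 + m - (j + 1) : ℕ) : ℤ)))‖ < δ
        rw [if_neg e1, if_neg e2]
        set i := K + 1 + m - (j + 1) with hi
        have hilt : i < m := by omega
        have hi1 : K + 1 + m - j = i + 1 := by omega
        rw [hi1]
        have hidx1 : n0 + ((i + 1 : ℕ) : ℤ) = (n0 + 1 + (i:ℤ)) := by push_cast; ring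
        have hidx2 : n0 + 1 + (i:ℤ) - 1 = n0 + (i:ℤ) := by ring
        have hTe : S (α (i + 1) • e (n0 + ((i + 1 : ℕ) : ℤ)))
            = (α (i + 1) * w (n0 + 1 + i)) • e (n0 + (i:ℤ)) := by
          rw [hSapp, map_smul, hidx1, Te, hidx2, smul_smul]
        rw [hTe, ← sub_smul]
        have hn : ‖(α (i + 1) * w (n0 + 1 + (i:ℤ)) - α i) • e (n0 + (i:ℤ))‖
            ≤ |α (i + 1) * w (n0 + 1 + (i:ℤ)) - α i| := by
          rw [norm_smul, Real.norm_eq_abs]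
          exact mul_le_of_le_one_right (abs_nonneg _) (henorm _)
        refine lt_of_le_of_lt hn ?_
        have := hαstep i hilt
        rwa [mul_comm (w (n0 + 1 + (i:ℤ)))] at this
  -- propagate to all basis vectors
  have hcommS : ∀ z : X, S (S z) = S (S z) := fun z => rfl
  have hup : ∀ n : ℤ, ChainRec S (e n) → ChainRec S (e (n + 1)) := by
    intro n h
    have h1 : ChainRec S (w (n + 1) • e n) := cr_smul S _ h
    have h2 : ChainRec S ((T.symm : X →L[ℝ] X) (w (n + 1) • e n)) := by
      refine cr_comm S _ ?_ h1
      intro z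
      show T ((T.symm : X →L[ℝ] X) z) = (T.symm : X →L[ℝ] X) (T z)
      simp
    have h3 : (T.symm : X →L[ℝ] X) (w (n + 1) • e n) = e (n + 1) := by
      show T.symm (w (n + 1) • e n) = e (n + 1)
      have h4 := Te (n + 1)
      rw [show n + 1 - 1 = n by ring] at h4
      rw [← h4]
      exact T.symm_apply_apply _
    rwa [h3] at h2
  have hdown : ∀ n : ℤ, ChainRec S (e n) → ChainRec S (e (n - 1)) := by
    intro n h
    have h1 : ChainRec S (S (e n)) := cr_comm S S (fun z => rfl) h
    have h2 : S (e n) = w n • e (n - 1) := by rw [hSapp]; exact Te n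
    rw [h2] at h1
    have h3 := cr_smul S (w n)⁻¹ h1
    rwa [smul_smul, inv_mul_cancel₀ (hw0 n), one_smul] at h3
  have hall : ∀ n : ℤ, ChainRec S (e n) := by
    have haux : ∀ d : ℕ, ChainRec S (e (n0 + d)) ∧ ChainRec S (e (n0 - d)) := by
      intro d
      induction d with
      | zero => constructor <;> simpa using hecr
      | succ d ih =>
        constructor
        · have := hup _ ih.1
          rwa [show n0 + (d:ℤ) + 1 = n0 + ((d + 1 : ℕ) : ℤ) by push_cast; ring] at this
        · have := hdown _ ih.2
          rwa [show n0 - (d:ℤ) - 1 = n0 - ((d + 1 : ℕ) : ℤ) by push_cast; ring] at this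
    intro n
    rcases le_total n0 n with h | h
    · have := (haux (n - n0).toNat).1
      rwa [show n0 + ((n - n0).toNat : ℤ) = n by omega] at this
    · have := (haux (n0 - n).toNat).2
      rwa [show n0 - ((n0 - n).toNat : ℤ) = n by omega] at this
  -- conclude for arbitrary points
  intro z
  apply cr_of_approx S
  intro ε hε
  obtain ⟨F, hF⟩ := hdens z ε hε
  exact ⟨_, cr_sum S F _ (fun n _ => cr_smul S _ (hall n)), hF⟩

end Master

section LpInst

variable (p : ENNReal) [Fact (1 ≤ p)]

noncomputable def lpcoord (n : ℤ) : LpZ p →ₗ[ℝ] ℝ where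
  toFun := fun y => y n
  map_add' := fun y z => congrFun (lp.coeFn_add y z) n
  map_smul' := fun a y => congrFun (lp.coeFn_smul a y) n

theorem lp_case (hp : p ≠ ⊤)
    (w : ℤ → ℝ) (C : ℝ) (hC1 : 1 ≤ C) (hC : ∀ n, |w n| ≤ C) (hw0 : ∀ n, w n ≠ 0)
    (T : LpZ p ≃L[ℝ] LpZ p)
    (hT : ∀ (x : LpZ p) (n : ℤ), (T x) n = w (n + 1) * x (n + 1))
    (hex : ∃ x : LpZ p, x ≠ 0 ∧ ChainRec (T : LpZ p →L[ℝ] LpZ p) x) :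
    ∀ x : LpZ p, ChainRec (T : LpZ p →L[ℝ] LpZ p) x := by
  have hp1 : (1 : ENNReal) ≤ p := Fact.out
  have hp0 : p ≠ 0 := by
    intro h; rw [h] at hp1; simp at hp1
  have hptop : 0 < p.toReal := ENNReal.toReal_pos hp0 hp
  apply master w C hC1 hC hw0 T (fun n => lpcoord p n) (fun n => lp.single p n 1)
  · -- hχnorm
    intro y n
    have h := lp.norm_apply_le_norm hp0 y n
    rw [Real.norm_eq_abs] at h
    exact h
  · -- hsep
    intro y hy
    apply lp.ext
    funext n
    have := hy n
    simpa using (show y n = 0 from this)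
  · -- hχT
    intro y n
    exact hT y n
  · -- he
    intro n m
    have h : ((lp.single p n (1:ℝ)) : ∀ _ : ℤ, ℝ) m = if m = n then 1 else 0 := by
      by_cases h : m = n
      · subst h
        rw [if_pos rfl, lp.single_apply_self]
      · rw [if_neg h, lp.single_apply_ne p n _ h]
    exact h
  · -- henorm
    intro n
    have := lp.norm_single (E := fun _ : ℤ => ℝ) (pos_iff_ne_zero.mpr hp0) n (1:ℝ)
    simp only [norm_one] at this
    exact le_of_eq this
  · -- htail
    intro y ε hε
    have hs : Summable (fun n : ℤ => ‖y n‖ ^ p.toReal) := (lp.memℓp y).summable hptop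
    have hten := hs.tendsto_cofinite_zero
    have hU : Set.Iio (ε ^ p.toReal) ∈ nhds (0 : ℝ) :=
      Iio_mem_nhds (Real.rpow_pos_of_pos hε _)
    have h2 := hten hU
    rw [Filter.mem_map, Filter.mem_cofinite] at h2
    refine h2.subset ?_
    intro n hn
    simp only [Set.mem_compl_iff, Set.mem_preimage, Set.mem_Iio, not_lt]
    have hn' : ε ≤ |y n| := hn
    refine Real.rpow_le_rpow (le_of_lt hε) ?_ (le_of_lt hptop)
    simpa using hn'
  · -- hdens
    intro y ε hε
    have hsum := lp.hasSum_single hp y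
    rw [HasSum] at hsum
    obtain ⟨F, hF⟩ := Metric.tendsto_atTop.mp hsum ε hε
    refine ⟨F, ?_⟩
    have h2 := hF F (le_refl F)
    rw [dist_eq_norm] at h2
    have h3 : (∑ i ∈ F, lp.single p i (y i)) = ∑ n ∈ F, (lpcoord p n) y • lp.single p n 1 := by
      refine Finset.sum_congr rfl fun i _ => ?_
      have h4 := lp.single_smul (E := fun _ : ℤ => ℝ) (𝕜 := ℝ) p i (y i) (1:ℝ)
      rw [smul_eq_mul, mul_one] at h4
      exact h4
    rw [norm_sub_rev, ← h3]
    exact h2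
  · exact hex

end LpInst

section C0Inst

noncomputable def c0single (n : ℤ) : C0Z where
  toFun := fun m => if m = n then (1:ℝ) else 0
  continuous_toFun := continuous_of_discreteTopology
  zero_at_infty' := by
    refine Filter.Tendsto.congr' ?_ tendsto_const_nhds
    have hmem : ({n}ᶜ : Set ℤ) ∈ Filter.cocompact ℤ :=
      Filter.mem_cocompact.mpr ⟨{n}, isCompact_singleton, subset_rfl⟩
    filter_upwards [hmem] with m hm
    simp only [Set.mem_compl_iff, Set.mem_singleton_iff] at hm
    simp [hm]

noncomputable def c0coord (n : ℤ) : C0Z →ₗ[ℝ] ℝ where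
  toFun := fun y => y n
  map_add' := fun y z => rfl
  map_smul' := fun a y => rfl

theorem c0_case
    (w : ℤ → ℝ) (C : ℝ) (hC1 : 1 ≤ C) (hC : ∀ n, |w n| ≤ C) (hw0 : ∀ n, w n ≠ 0)
    (T : C0Z ≃L[ℝ] C0Z)
    (hT : ∀ (x : C0Z) (n : ℤ), (T x) n = w (n + 1) * x (n + 1))
    (hex : ∃ x : C0Z, x ≠ 0 ∧ ChainRec (T : C0Z →L[ℝ] C0Z) x) :
    ∀ x : C0Z, ChainRec (T : C0Z →L[ℝ] C0Z) x := by
  have hcoordnorm : ∀ (y : C0Z) (n : ℤ), |y n| ≤ ‖y‖ := by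
    intro y n
    have h := BoundedContinuousFunction.norm_coe_le_norm y.toBCF n
    simpa using h
  have htail : ∀ (y : C0Z) (ε : ℝ), 0 < ε → {n : ℤ | ε ≤ |(c0coord n) y|}.Finite := by
    intro y ε hε
    have hten : Filter.Tendsto y (Filter.cocompact ℤ) (nhds 0) := zero_at_infty y
    have h2 := hten (Metric.ball_mem_nhds (0:ℝ) hε)
    rw [Filter.mem_map, Filter.mem_cocompact] at h2
    obtain ⟨K, hK, hKsub⟩ := h2
    have hKfin : K.Finite := hK.finite_of_discrete
    refine hKfin.subset ?_
    intro m hm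
    by_contra hmK
    have h3 := hKsub hmK
    simp only [Set.mem_preimage, Metric.mem_ball, Real.dist_0_eq_abs] at h3
    have hm' : ε ≤ |y m| := hm
    linarith
  apply master w C hC1 hC hw0 T (fun n => c0coord n) (fun n => c0single n)
  · exact fun y n => hcoordnorm y n
  · -- hsep
    intro y hy
    ext n
    exact hy n
  · exact fun y n => hT y n
  · -- he
    intro n m
    show (if m = n then (1:ℝ) else 0) = _
    rfl
  · -- henorm
    intro n
    rw [← ZeroAtInftyContinuousMap.norm_toBCF_eq_norm]
    refine (BoundedContinuousFunction.norm_le zero_le_one).mpr fun m => ?_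
    show ‖if m = n then (1:ℝ) else 0‖ ≤ 1
    split <;> simp
  · exact htail
  · -- hdens
    intro y ε hε
    have hfin := htail y (ε / 2) (half_pos hε)
    set F := hfin.toFinset with hF
    refine ⟨F, ?_⟩
    have hbound : ∀ m : ℤ, |(c0coord m) (y - ∑ n ∈ F, (c0coord n) y • c0single n)| ≤ ε / 2 := by
      intro m
      rw [map_sub, map_sum]
      have h4 : ∀ n ∈ F, (c0coord m) ((c0coord n) y • c0single n)
          = (if m = n then (c0coord n) y else 0) := by
        intro n _
        rw [map_smul, smul_eq_mul]
        show y n * (if m = n then (1:ℝ) else 0) = _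
        by_cases h : m = n
        · rw [if_pos h, if_pos h, mul_one]; rfl
        · rw [if_neg h, if_neg h, mul_zero]
      rw [Finset.sum_congr rfl h4, Finset.sum_ite_eq]
      by_cases hm : m ∈ F
      · rw [if_pos hm]
        show |y m - y m| ≤ ε / 2
        simp [le_of_lt (half_pos hε)]
      · rw [if_neg hm]
        have : ¬ (ε / 2 ≤ |y m|) := by
          intro hcon
          exact hm (hfin.mem_toFinset.mpr hcon)
        show |y m - 0| ≤ ε / 2
        rw [sub_zero]
        linarith [not_le.mp this]
    calc ‖y - ∑ n ∈ F, (c0coord n) y • c0single n‖ ≤ ε / 2 := by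
          rw [← ZeroAtInftyContinuousMap.norm_toBCF_eq_norm]
          refine (BoundedContinuousFunction.norm_le (le_of_lt (half_pos hε))).mpr fun m => ?_
          show ‖(y - ∑ n ∈ F, (c0coord n) y • c0single n) m‖ ≤ ε / 2
          rw [Real.norm_eq_abs]
          exact hbound m
      _ < ε := by linarith
  · exact hex

end C0Inst

/-- If an invertible bilateral weighted backward shift on `ℓᵖ(ℤ)` (`1 ≤ p < ∞`) or
`c₀(ℤ)`, with weights bounded and bounded away from zero, has a nontrivial chain
recurrent point, then every point is chain recurrent. -/
theorem stmt7 (w : ℤ → ℝ) (hbd : ∃ C : ℝ, ∀ n : ℤ, |w n| ≤ C)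
    (hbelow : ∃ c > (0 : ℝ), ∀ n : ℤ, c ≤ |w n|) :
    (∀ (p : ENNReal) [Fact (1 ≤ p)], p ≠ ⊤ →
      ∀ T : LpZ p ≃L[ℝ] LpZ p,
        (∀ (x : LpZ p) (n : ℤ), (T x) n = w (n + 1) * x (n + 1)) →
        (∃ x : LpZ p, x ≠ 0 ∧ ChainRec (T : LpZ p →L[ℝ] LpZ p) x) →
        ∀ x : LpZ p, ChainRec (T : LpZ p →L[ℝ] LpZ p) x) ∧
    (∀ T : C0Z ≃L[ℝ] C0Z,
        (∀ (x : C0Z) (n : ℤ), (T x) n = w (n + 1) * x (n + 1)) →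
        (∃ x : C0Z, x ≠ 0 ∧ ChainRec (T : C0Z →L[ℝ] C0Z) x) →
        ∀ x : C0Z, ChainRec (T : C0Z →L[ℝ] C0Z) x) := by
  obtain ⟨C, hCb⟩ := hbd
  obtain ⟨cl, hclpos, hbel⟩ := hbelow
  have hC' : ∀ n, |w n| ≤ max C 1 := fun n => le_trans (hCb n) (le_max_left _ _)
  have hC1 : (1:ℝ) ≤ max C 1 := le_max_right _ _
  have hw0 : ∀ n, w n ≠ 0 := by
    intro n h
    have := hbel n
    rw [h, abs_zero] at this
    linarith
  constructor
  · intro p _ hp T hT hex x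
    exact lp_case p hp w (max C 1) hC1 hC' hw0 T hT hex x
  · intro T hT hex x
    exact c0_case w (max C 1) hC1 hC' hw0 T hT hex x
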